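/- Let p be an odd prime with K(p) ≢ 0 (mod p), and suppose p divides K(n) for some n with 0 < n < p. Then p does not divide S(p-1-n). -/

import Mathlib

lemma wilson_ext (p : ℕ) [Fact p.Prime] :
    ∀ j, j ≤ p - 1 →
      ((p - 1 - j).factorial : ZMod p) * (j.factorial : ZMod p) = (-1) ^ (j + 1) := by
  intro j
  induction j with
  | zero => intro _; simp [ZMod.wilsons_lemma]
  | succ j ih =>
    intro hj
    have hp2 : 2 ≤ p := (Fact.out : p.Prime).two_le
    have ih' := ih (by omega)
    have hfac : (p - 1 - j).factorial = (p - 1 - j) * (p - 1 - (j + 1)).factorial := by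
      rw [show p - 1 - j = (p - 1 - (j + 1)) + 1 from by omega, Nat.factorial_succ]
    have hcast : ((p - 1 - j : ℕ) : ZMod p) = -((j + 1 : ℕ) : ZMod p) := by
      have h2 : (((p - 1 - j) + (j + 1) : ℕ) : ZMod p) = 0 := by
        rw [show (p - 1 - j) + (j + 1) = p from by omega]; simp
      push_cast at h2 ⊢
      linear_combination h2
    rw [hfac] at ih'
    push_cast at ih'
    rw [hcast] at ih'
    push_cast at ih'
    rw [Nat.factorial_succ]
    push_cast
    linear_combination -ih'

/-- Kurepa's left factorial. -/
def K (n : ℕ) : ℕ := ∑ k ∈ Finset.range n, k.factorial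

theorem kurepa_pair_subfactorial_not_dvd (p n : ℕ) (hp : p.Prime) (hodd : Odd p)
    (hKp : ¬ p ∣ K p) (hn0 : 0 < n) (hnp : n < p) (hdvd : p ∣ K n) :
    ¬ p ∣ numDerangements (p - 1 - n) := by
  haveI : Fact p.Prime := ⟨hp⟩
  have hp2 : 2 ≤ p := hp.two_le
  set m := p - 1 - n with hm
  have hmlt : m < p := by omega
  -- split K p
  have hsplit : (K p : ZMod p) = (K n : ZMod p) + ∑ k ∈ Finset.Ico n p, (k.factorial : ZMod p) := by
    have : K p = K n + ∑ k ∈ Finset.Ico n p, k.factorial := by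
      rw [K, K, Finset.range_eq_Ico,
        ← Finset.sum_Ico_consecutive _ (Nat.zero_le n) hnp.le, ← Finset.range_eq_Ico]
    rw [this]; push_cast; ring
  have hKn0 : (K n : ZMod p) = 0 := (ZMod.natCast_eq_zero_iff _ _).mpr hdvd
  have hKp0 : (K p : ZMod p) ≠ 0 := fun h => hKp ((ZMod.natCast_eq_zero_iff _ _).mp h)
  -- reindex
  have hreindex : ∑ k ∈ Finset.Ico n p, (k.factorial : ZMod p)
      = ∑ j ∈ Finset.range (m + 1), ((p - 1 - j).factorial : ZMod p) := by
    apply Finset.sum_nbij' (fun k => p - 1 - k) (fun j => p - 1 - j)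
    · intro a ha
      simp only [Finset.mem_Ico] at ha
      simp only [Finset.mem_range]
      omega
    · intro a ha
      simp only [Finset.mem_range] at ha
      simp only [Finset.mem_Ico]
      omega
    · intro a ha
      simp only [Finset.mem_Ico] at ha
      omega
    · intro a ha
      simp only [Finset.mem_range] at ha
      omega
    · intro a ha
      simp only [Finset.mem_Ico] at ha
      congr 2
      omega
  -- derangement sum
  have hder : (numDerangements m : ZMod p)
      = ∑ j ∈ Finset.range (m + 1), (-1 : ZMod p) ^ j * ((j+1).ascFactorial (m - j) : ZMod p) := by
    have h := numDerangements_sum m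
    have h2 := congrArg (fun z : ℤ => (z : ZMod p)) h
    push_cast at h2
    exact h2
  -- termwise identity
  have hterm : ∀ j ∈ Finset.range (m + 1),
      (-1 : ZMod p) ^ j * ((j+1).ascFactorial (m - j) : ZMod p)
        = -(m.factorial : ZMod p) * ((p - 1 - j).factorial : ZMod p) := by
    intro j hj
    simp only [Finset.mem_range] at hj
    have hjm : j ≤ m := by omega
    have hjfac : (j.factorial : ZMod p) ≠ 0 := by
      rw [Ne, ZMod.natCast_eq_zero_iff]
      intro h
      have := (Nat.Prime.dvd_factorial hp).mp h
      omega
    have hasc : j.factorial * (j+1).ascFactorial (m - j) = m.factorial := by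
      rw [Nat.factorial_mul_ascFactorial j (m - j), show j + (m - j) = m from by omega]
    have hw := wilson_ext p j (by omega)
    apply mul_right_cancel₀ hjfac
    have hasc' : ((j+1).ascFactorial (m - j) : ZMod p) * (j.factorial : ZMod p)
        = (m.factorial : ZMod p) := by
      rw [← Nat.cast_mul, mul_comm ((j+1).ascFactorial (m-j)) j.factorial, hasc]
    calc (-1 : ZMod p) ^ j * ((j+1).ascFactorial (m - j) : ZMod p) * (j.factorial : ZMod p)
        = (-1 : ZMod p) ^ j * (m.factorial : ZMod p) := by rw [mul_assoc, hasc']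
      _ = -(m.factorial : ZMod p) * ((p - 1 - j).factorial : ZMod p) * (j.factorial : ZMod p) := by
          rw [mul_assoc, hw]; ring
  have hkey : (numDerangements m : ZMod p) = -(m.factorial : ZMod p) * ((K p : ZMod p)) := by
    rw [hder, Finset.sum_congr rfl hterm, ← Finset.mul_sum, ← hreindex, hsplit, hKn0, zero_add]
  intro hdvd2
  have h0 : (numDerangements m : ZMod p) = 0 := (ZMod.natCast_eq_zero_iff _ _).mpr hdvd2
  rw [hkey] at h0
  have hmfac : (m.factorial : ZMod p) ≠ 0 := by
    rw [Ne, ZMod.natCast_eq_zero_iff]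
    intro h
    have := (Nat.Prime.dvd_factorial hp).mp h
    omega
  have := mul_eq_zero.mp h0
  rcases this with h | h
  · exact hmfac (neg_eq_zero.mp h)
  · exact hKp0 h
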